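/- (Existence and uniqueness of the generalized Kelly rule). Let (F_t) be a filtration with T^{-1}(Γ)∈F_{t+1} ⟺ Γ∈F_t, let R(ω) be an F-adapted Δ-valued random vector (Δ the unit simplex in ℝ^K), and let r∈(0,1). Then the equation r·E_0[λ*(Tω)] + (1−r)·E_0[R(Tω)] = λ*(ω) (a.s.), where E_0 = E(·|F_0), has a unique F_0-measurable Δ-valued solution λ*. -/

import Mathlib

open MeasureTheory Filter

section KellyHelpers

variable {Ω : Type*} {m m0 : MeasurableSpace Ω} {μ : Measure Ω}

/-- a.e. pullback along a measure preserving map. -/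
lemma kelly_ae_comp {T : Ω → Ω} (hT : MeasurePreserving T μ μ)
    {p : Ω → Prop} (h : ∀ᵐ ω ∂μ, p ω) : ∀ᵐ ω ∂μ, p (T ω) := by
  rw [ae_iff] at h ⊢
  exact hT.quasiMeasurePreserving.preimage_null h

/-- coordinate evaluation commutes with (vector-valued) conditional expectation. -/
lemma kelly_condexp_eval {K : ℕ} (hm : m ≤ m0) [IsFiniteMeasure μ]
    {f : Ω → Fin K → ℝ} (hf : Integrable f μ) (i : Fin K) :
    (fun ω => (μ[f|m]) ω i) =ᵐ[μ] μ[fun ω => f ω i|m] := by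
  set L : (Fin K → ℝ) →L[ℝ] ℝ := ContinuousLinearMap.proj i with hL
  refine ae_eq_condExp_of_forall_setIntegral_eq hm (L.integrable_comp hf) ?_ ?_ ?_
  · intro s hs hμs
    exact (L.integrable_comp integrable_condExp).integrableOn
  · intro s hs hμs
    calc ∫ x in s, (μ[f|m]) x i ∂μ = ∫ x in s, L ((μ[f|m]) x) ∂μ := rfl
    _ = L (∫ x in s, (μ[f|m]) x ∂μ) :=
        L.integral_comp_comm (integrable_condExp.integrableOn : IntegrableOn (μ[f|m]) s μ)
    _ = L (∫ x in s, f x ∂μ) := by rw [setIntegral_condExp hm hf hs]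
    _ = ∫ x in s, L (f x) ∂μ :=
        (L.integral_comp_comm (hf.integrableOn : IntegrableOn f s μ)).symm
    _ = ∫ x in s, f x i ∂μ := rfl
  · exact StronglyMeasurable.aestronglyMeasurable (L.continuous.comp_stronglyMeasurable stronglyMeasurable_condExp)

/-- key contraction lemma: an integrable a.e. fixed point of `d ↦ r E₀[d∘T]` is a.e. zero. -/
lemma kelly_contraction_zero (hm : m ≤ m0) [IsProbabilityMeasure μ]
    {T : Ω → Ω} (hT : MeasurePreserving T μ μ)
    {r : ℝ} (hr0 : 0 < r) (hr1 : r < 1) {d : Ω → ℝ} (hd : Integrable d μ)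
    (h : d =ᵐ[μ] fun ω => r * (μ[fun ω' => d (T ω')|m]) ω) : d =ᵐ[μ] 0 := by
  haveI : SigmaFinite (μ.trim hm) := inferInstance
  set g : Ω → ℝ := fun ω' => d (T ω') with hg_def
  have hg : Integrable g μ :=
    memLp_one_iff_integrable.mp ((memLp_one_iff_integrable.mpr hd).comp_measurePreserving hT)
  set a : ENNReal := eLpNorm d 1 μ with ha_def
  have ha_top : a ≠ ⊤ := (memLp_one_iff_integrable.mpr hd).eLpNorm_ne_top
  have h1 : a = eLpNorm (fun ω => r * (μ[g|m]) ω) 1 μ := eLpNorm_congr_ae h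
  have h2 : eLpNorm (fun ω => r * (μ[g|m]) ω) 1 μ = ‖r‖₊ * eLpNorm (μ[g|m]) 1 μ := by
    have := eLpNorm_const_smul (p := (1 : ENNReal)) (μ := μ) r (μ[g|m])
    rw [enorm_eq_nnnorm] at this
    exact this
  have h3 : eLpNorm (μ[g|m]) 1 μ ≤ eLpNorm g 1 μ := eLpNorm_one_condExp_le_eLpNorm g
  have h4 : eLpNorm g 1 μ = a := by
    rw [ha_def]
    exact eLpNorm_comp_measurePreserving hd.aestronglyMeasurable hT
  have hr' : (‖r‖₊ : ENNReal) < 1 := by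
    rw [ENNReal.coe_lt_one_iff, ← NNReal.coe_lt_one, coe_nnnorm, Real.norm_eq_abs,
      abs_of_pos hr0]
    exact hr1
  have hle' : a ≤ ‖r‖₊ * a := by
    calc a = ‖r‖₊ * eLpNorm (μ[g|m]) 1 μ := by rw [h1, h2]
    _ ≤ ‖r‖₊ * a := by rw [← h4]; exact mul_le_mul_right h3 _
  have ha0 : a = 0 := by
    by_contra hne
    have : (‖r‖₊ : ENNReal) * a < 1 * a :=
      (ENNReal.mul_lt_mul_iff_left hne ha_top).mpr hr'
    rw [one_mul] at this
    exact absurd hle' (not_le.mpr this)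
  exact (eLpNorm_eq_zero_iff hd.aestronglyMeasurable one_ne_zero).mp ha0

/-- `condexpL1CLM` agrees a.e. with `condexp`. -/
lemma kelly_condexpL1CLM_ae (hm : m ≤ m0) [IsProbabilityMeasure μ] (g : Ω →₁[μ] ℝ) :
    ⇑(condExpL1CLM ℝ hm μ g) =ᵐ[μ] μ[⇑g|m] := by
  haveI : SigmaFinite (μ.trim hm) := inferInstance
  have h := condExp_ae_eq_condExpL1CLM (E := ℝ) hm (L1.integrable_coeFn g)
  rw [Integrable.toL1_coeFn g (L1.integrable_coeFn g)] at h
  exact h.symm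

/-- `condexpL1CLM` is nonexpansive on real `L¹`. -/
lemma kelly_norm_condexpL1CLM_le (hm : m ≤ m0) [IsProbabilityMeasure μ] (g : Ω →₁[μ] ℝ) :
    ‖condExpL1CLM ℝ hm μ g‖ ≤ ‖g‖ := by
  rw [Lp.norm_def, Lp.norm_def]
  apply ENNReal.toReal_mono (Lp.eLpNorm_ne_top g)
  calc eLpNorm (⇑(condExpL1CLM ℝ hm μ g)) 1 μ
      = eLpNorm (μ[⇑g|m]) 1 μ := eLpNorm_congr_ae (kelly_condexpL1CLM_ae hm g)
  _ ≤ eLpNorm (⇑g) 1 μ := eLpNorm_one_condExp_le_eLpNorm _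

end KellyHelpers

/-- Existence and uniqueness of the generalized Kelly rule `λ*`, the `F_0`-measurable
simplex-valued solution of `r E_0[λ*(T·)] + (1−r) E_0[R(T·)] = λ*`. -/
theorem stmt15 {Ω : Type*} [m0 : MeasurableSpace Ω] (μ : Measure Ω) [IsProbabilityMeasure μ]
    (T : Ω → Ω) (hT : MeasurePreserving T μ μ)
    (𝓕 : ℕ → MeasurableSpace Ω) (hle : ∀ t, 𝓕 t ≤ m0) (hmono : Monotone 𝓕)
    (hcompat : ∀ (t : ℕ) (s : Set Ω), MeasurableSet[𝓕 (t + 1)] (T ⁻¹' s) ↔ MeasurableSet[𝓕 t] s)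
    (K : ℕ) [NeZero K]
    (R : Ω → Fin K → ℝ) (hRmeas : Measurable[𝓕 0] R)
    (hRΔ : ∀ ω, R ω ∈ stdSimplex ℝ (Fin K))
    (r : ℝ) (hr0 : 0 < r) (hr1 : r < 1) :
    ∃ l : Ω → Fin K → ℝ, Measurable[𝓕 0] l ∧ (∀ ω, l ω ∈ stdSimplex ℝ (Fin K)) ∧
      (∀ᵐ ω ∂μ,
        r • (μ[fun ω' => l (T ω')|𝓕 0]) ω + (1 - r) • (μ[fun ω' => R (T ω')|𝓕 0]) ω = l ω) ∧
      ∀ l' : Ω → Fin K → ℝ, Measurable[𝓕 0] l' → (∀ ω, l' ω ∈ stdSimplex ℝ (Fin K)) →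
        (∀ᵐ ω ∂μ,
          r • (μ[fun ω' => l' (T ω')|𝓕 0]) ω + (1 - r) • (μ[fun ω' => R (T ω')|𝓕 0]) ω = l' ω) →
        l' =ᵐ[μ] l := by
  classical
  have hm := hle 0
  haveI : SigmaFinite (μ.trim hm) := inferInstance
  -- simplex-valued measurable functions are integrable
  have hIntOf : ∀ f : Ω → Fin K → ℝ, Measurable[𝓕 0] f →
      (∀ ω, f ω ∈ stdSimplex ℝ (Fin K)) → Integrable f μ := by
    intro f hfm hfΔ
    refine memLp_one_iff_integrable.mp (MemLp.of_bound
      ((hfm.mono hm le_rfl).aestronglyMeasurable) 1 (Eventually.of_forall fun ω => ?_))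
    rw [pi_norm_le_iff_of_nonneg (by norm_num)]
    intro i
    rw [Real.norm_eq_abs, abs_of_nonneg ((hfΔ ω).1 i)]
    calc f ω i ≤ ∑ j, f ω j :=
      Finset.single_le_sum (fun j _ => (hfΔ ω).1 j) (Finset.mem_univ i)
    _ = 1 := (hfΔ ω).2
  have hRint : Integrable R μ := hIntOf R hRmeas hRΔ
  have hcompInt : ∀ f : Ω → Fin K → ℝ, Integrable f μ →
      Integrable (fun ω => f (T ω)) μ := fun f hf =>
    memLp_one_iff_integrable.mp ((memLp_one_iff_integrable.mpr hf).comp_measurePreserving hT)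
  have hcompIntR : ∀ f : Ω → ℝ, Integrable f μ →
      Integrable (fun ω => f (T ω)) μ := fun f hf =>
    memLp_one_iff_integrable.mp ((memLp_one_iff_integrable.mpr hf).comp_measurePreserving hT)
  have hRT : Integrable (fun ω => R (T ω)) μ := hcompInt R hRint
  have hproji : ∀ (f : Ω → Fin K → ℝ), Integrable f μ → ∀ i, Integrable (fun ω => f ω i) μ :=
    fun f hf i => (ContinuousLinearMap.proj (R := ℝ) (φ := fun _ : Fin K => ℝ) i).integrable_comp hf
  have hRTi : ∀ i, Integrable (fun ω => R (T ω) i) μ := hproji _ hRT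
  -- the contraction on `(Fin K → L¹)`
  let CE : (Ω →₁[μ] ℝ) → (Ω →₁[μ] ℝ) :=
    fun g => condExpL1CLM ℝ hm μ (Lp.compMeasurePreserving T hT g)
  have hCE_lip : ∀ g₁ g₂ : Ω →₁[μ] ℝ, dist (CE g₁) (CE g₂) ≤ dist g₁ g₂ := by
    intro g₁ g₂
    rw [dist_eq_norm, dist_eq_norm]
    have heq : CE g₁ - CE g₂
        = condExpL1CLM ℝ hm μ (Lp.compMeasurePreserving T hT (g₁ - g₂)) := by
      simp only [CE, ← map_sub]
    rw [heq]
    calc ‖condExpL1CLM ℝ hm μ (Lp.compMeasurePreserving T hT (g₁ - g₂))‖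
        ≤ ‖Lp.compMeasurePreserving T hT (g₁ - g₂)‖ := kelly_norm_condexpL1CLM_le hm _
    _ = ‖g₁ - g₂‖ := Lp.norm_compMeasurePreserving _ hT
  let c : Fin K → (Ω →₁[μ] ℝ) :=
    fun i => (1 - r) • condExpL1CLM ℝ hm μ ((hRTi i).toL1 _)
  let Φ : (Fin K → (Ω →₁[μ] ℝ)) → (Fin K → (Ω →₁[μ] ℝ)) :=
    fun F i => r • CE (F i) + c i
  have hΦlip : LipschitzWith ⟨r, hr0.le⟩ Φ := by
    apply LipschitzWith.of_dist_le_mul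
    intro F G
    change dist (Φ F) (Φ G) ≤ r * dist F G
    rw [dist_pi_le_iff (by positivity)]
    intro i
    calc dist (Φ F i) (Φ G i) = dist (r • CE (F i)) (r • CE (G i)) := dist_add_right _ _ _
    _ = ‖r‖ * dist (CE (F i)) (CE (G i)) := dist_smul₀ r _ _
    _ = r * dist (CE (F i)) (CE (G i)) := by rw [Real.norm_eq_abs, abs_of_pos hr0]
    _ ≤ r * dist (F i) (G i) := by
        exact mul_le_mul_of_nonneg_left (hCE_lip _ _) hr0.le
    _ ≤ r * dist F G := mul_le_mul_of_nonneg_left (dist_le_pi_dist F G i) hr0.le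
  have hc : ContractingWith ⟨r, hr0.le⟩ Φ := ⟨by exact_mod_cast hr1, hΦlip⟩
  haveI : Nonempty (Fin K → (Ω →₁[μ] ℝ)) := ⟨0⟩
  let F : Fin K → (Ω →₁[μ] ℝ) := ContractingWith.fixedPoint Φ hc
  have hF : Φ F = F := hc.fixedPoint_isFixedPt
  -- nonnegativity is preserved
  have hCE_nonneg : ∀ g : Ω →₁[μ] ℝ, 0 ≤ g → 0 ≤ᵐ[μ] ⇑(CE g) := by
    intro g hg
    have hg' : 0 ≤ᵐ[μ] ⇑g := (Lp.coeFn_nonneg _).mpr hg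
    have hgT : 0 ≤ᵐ[μ] fun ω => (g : Ω → ℝ) (T ω) := kelly_ae_comp hT hg'
    have hcomp : ⇑(Lp.compMeasurePreserving T hT g) =ᵐ[μ] fun ω => (g : Ω → ℝ) (T ω) :=
      Lp.coeFn_compMeasurePreserving g hT
    calc (0 : Ω → ℝ) ≤ᵐ[μ] μ[fun ω => (g : Ω → ℝ) (T ω)|𝓕 0] := condExp_nonneg hgT
    _ =ᵐ[μ] μ[⇑(Lp.compMeasurePreserving T hT g)|𝓕 0] := condExp_congr_ae hcomp.symm
    _ =ᵐ[μ] ⇑(CE g) := (kelly_condexpL1CLM_ae hm _).symm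
  have hc_nonneg : ∀ i, 0 ≤ᵐ[μ] ⇑(c i) := by
    intro i
    have h0 : 0 ≤ᵐ[μ] fun ω => R (T ω) i := Eventually.of_forall fun ω => (hRΔ (T ω)).1 i
    have h1 : ⇑((hRTi i).toL1 _) =ᵐ[μ] fun ω => R (T ω) i := Integrable.coeFn_toL1 _
    have h2 : ⇑(condExpL1CLM ℝ hm μ ((hRTi i).toL1 _)) =ᵐ[μ] μ[fun ω => R (T ω) i|𝓕 0] :=
      (kelly_condexpL1CLM_ae hm _).trans (condExp_congr_ae h1)
    have h3 : ⇑(c i) =ᵐ[μ] (1 - r) • ⇑(condExpL1CLM ℝ hm μ ((hRTi i).toL1 _)) :=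
      Lp.coeFn_smul _ _
    filter_upwards [h3, h2, condExp_nonneg (m := 𝓕 0) h0] with ω e3 e2 e0
    simp only [Pi.zero_apply] at e0 ⊢
    rw [e3]
    simp only [Pi.smul_apply, smul_eq_mul]
    rw [e2]
    nlinarith [e0, hr1]
  have hΦS : ∀ G : Fin K → (Ω →₁[μ] ℝ), (∀ i, 0 ≤ G i) → ∀ i, 0 ≤ Φ G i := by
    intro G hG i
    rw [← Lp.coeFn_nonneg]
    have h1 : ⇑(Φ G i) =ᵐ[μ] r • ⇑(CE (G i)) + ⇑(c i) := by
      calc ⇑(Φ G i) =ᵐ[μ] ⇑(r • CE (G i)) + ⇑(c i) := Lp.coeFn_add _ _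
      _ =ᵐ[μ] r • ⇑(CE (G i)) + ⇑(c i) := by
          filter_upwards [Lp.coeFn_smul r (CE (G i))] with ω h
          simp [h]
    filter_upwards [h1, hCE_nonneg (G i) (hG i), hc_nonneg i] with ω e1 e2 e3
    rw [e1]
    simp only [Pi.add_apply, Pi.smul_apply, smul_eq_mul]
    have h2' : (0:ℝ) ≤ (CE (G i)) ω := e2
    have h3' : (0:ℝ) ≤ (c i) ω := e3
    positivity
  have hFS : ∀ i, 0 ≤ F i := by
    have hS_closed : IsClosed {G : Fin K → (Ω →₁[μ] ℝ) | ∀ i, 0 ≤ G i} := by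
      have : {G : Fin K → (Ω →₁[μ] ℝ) | ∀ i, 0 ≤ G i}
          = ⋂ i, (fun G : Fin K → (Ω →₁[μ] ℝ) => G i) ⁻¹' {x | 0 ≤ x} := by
        ext G; simp [Set.mem_iInter]
      rw [this]
      exact isClosed_iInter fun i => isClosed_nonneg.preimage (continuous_apply i)
    have htend := hc.tendsto_iterate_fixedPoint 0
    refine hS_closed.mem_of_tendsto htend (Eventually.of_forall ?_)
    intro n
    induction n with
    | zero => intro i; simp
    | succ n ih =>
        rw [Function.iterate_succ_apply']
        exact hΦS _ ih
  -- the candidate solution, coordinatewise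
  let G : Fin K → Ω → ℝ := fun i => μ[fun ω => (F i : Ω → ℝ) (T ω)|𝓕 0]
  let H : Fin K → Ω → ℝ := fun i => μ[fun ω => R (T ω) i|𝓕 0]
  let lt : Ω → Fin K → ℝ := fun ω i => r * G i ω + (1 - r) * H i ω
  have hFi_ae : ∀ i, (F i : Ω → ℝ) =ᵐ[μ] fun ω => lt ω i := by
    intro i
    have h0 : Φ F i = F i := congrFun hF i
    have hcomp : ⇑(Lp.compMeasurePreserving T hT (F i)) =ᵐ[μ]
        fun ω => (F i : Ω → ℝ) (T ω) := Lp.coeFn_compMeasurePreserving _ hT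
    have hCEae : ⇑(CE (F i)) =ᵐ[μ] G i :=
      (kelly_condexpL1CLM_ae hm _).trans (condExp_congr_ae hcomp)
    have hcae : ⇑(c i) =ᵐ[μ] fun ω => (1 - r) * H i ω := by
      have h1 : ⇑((hRTi i).toL1 _) =ᵐ[μ] fun ω => R (T ω) i := Integrable.coeFn_toL1 _
      have h2 : ⇑(condExpL1CLM ℝ hm μ ((hRTi i).toL1 _)) =ᵐ[μ] H i :=
        (kelly_condexpL1CLM_ae hm _).trans (condExp_congr_ae h1)
      filter_upwards [Lp.coeFn_smul (1 - r) (condExpL1CLM ℝ hm μ ((hRTi i).toL1 _)), h2]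
        with ω e1 e2
      rw [e1]
      simp only [Pi.smul_apply, smul_eq_mul]
      rw [e2]
    calc ⇑(F i) =ᵐ[μ] ⇑(Φ F i) := by rw [h0]
    _ =ᵐ[μ] ⇑(r • CE (F i)) + ⇑(c i) := Lp.coeFn_add _ _
    _ =ᵐ[μ] fun ω => lt ω i := by
        filter_upwards [Lp.coeFn_smul r (CE (F i)), hCEae, hcae] with ω e1 e2 e3
        simp only [Pi.add_apply, lt]
        rw [e1, e3]
        simp only [Pi.smul_apply, smul_eq_mul]
        rw [e2]
  -- integrability of the pieces
  have hGint : ∀ i, Integrable (G i) μ := fun i => integrable_condExp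
  have hHint : ∀ i, Integrable (H i) μ := fun i => integrable_condExp
  have hlti : ∀ i, Integrable (fun ω => lt ω i) μ := by
    intro i
    exact ((hGint i).const_mul r).add ((hHint i).const_mul (1 - r))
  -- sum of coordinates is a.e. 1
  have hsum1 : (fun ω => ∑ i, lt ω i) =ᵐ[μ] fun _ => (1 : ℝ) := by
    set s : Ω → ℝ := fun ω => ∑ i, lt ω i with hs_def
    have hsint : Integrable s μ := integrable_finset_sum _ fun i _ => hlti i
    set sF : Ω → ℝ := fun ω => ∑ i, (F i : Ω → ℝ) ω with hsF_def
    have hsFint : Integrable sF μ :=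
      integrable_finset_sum _ fun i _ => L1.integrable_coeFn (F i)
    have hssF : s =ᵐ[μ] sF := by
      have : ∀ᵐ ω ∂μ, ∀ i, (F i : Ω → ℝ) ω = lt ω i := ae_all_iff.mpr hFi_ae
      filter_upwards [this] with ω h
      simp only [s, sF]
      exact Finset.sum_congr rfl fun i _ => (h i).symm
    have hsT : Integrable (fun ω => s (T ω)) μ := hcompIntR s hsint
    have hcondsum : μ[fun ω => s (T ω)|𝓕 0] =ᵐ[μ] fun ω => ∑ i, G i ω := by
      have h1 : (fun ω => s (T ω)) =ᵐ[μ] fun ω => ∑ i, (F i : Ω → ℝ) (T ω) := by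
        have := kelly_ae_comp hT hssF
        filter_upwards [this] with ω h
        simpa [sF] using h
      calc μ[fun ω => s (T ω)|𝓕 0] =ᵐ[μ] μ[fun ω => ∑ i, (F i : Ω → ℝ) (T ω)|𝓕 0] :=
        condExp_congr_ae h1
      _ =ᵐ[μ] fun ω => ∑ i, G i ω := by
          have hfun : (fun ω => ∑ i, (F i : Ω → ℝ) (T ω))
              = ∑ i, fun ω => (F i : Ω → ℝ) (T ω) := by
            funext ω; simp
          rw [hfun]
          have := condExp_finsetSum (m := 𝓕 0) (s := Finset.univ)
            (f := fun i ω => (F i : Ω → ℝ) (T ω))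
            (fun i _ => hcompIntR _ (L1.integrable_coeFn (F i)))
          filter_upwards [this] with ω h
          rw [h]
          simp [G]
    have hHsum : (fun ω => ∑ i, H i ω) =ᵐ[μ] fun _ => (1 : ℝ) := by
      have h1 : μ[fun ω => ∑ i, R (T ω) i|𝓕 0] =ᵐ[μ] fun ω => ∑ i, H i ω := by
        have hfun : (fun ω => ∑ i, R (T ω) i) = ∑ i, fun ω => R (T ω) i := by
          funext ω; simp
        rw [hfun]
        have := condExp_finsetSum (m := 𝓕 0) (s := Finset.univ)
          (f := fun i ω => R (T ω) i) (fun i _ => hRTi i)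
        filter_upwards [this] with ω h
        rw [h]
        simp [H]
      have h2 : (fun ω => ∑ i, R (T ω) i) = fun _ => (1 : ℝ) := by
        funext ω; exact (hRΔ (T ω)).2
      calc (fun ω => ∑ i, H i ω) =ᵐ[μ] μ[fun ω => ∑ i, R (T ω) i|𝓕 0] := h1.symm
      _ =ᵐ[μ] μ[fun _ => (1:ℝ)|𝓕 0] := by rw [h2]
      _ =ᵐ[μ] fun _ => (1:ℝ) := Filter.EventuallyEq.of_eq (condExp_const hm (1:ℝ))
    -- now the defect d := s - 1
    set d : Ω → ℝ := fun ω => s ω - 1 with hd_def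
    have hdint : Integrable d μ := hsint.sub (integrable_const 1)
    have hdT : Integrable (fun ω => d (T ω)) μ := hcompIntR d hdint
    have hkey : d =ᵐ[μ] fun ω => r * (μ[fun ω' => d (T ω')|𝓕 0]) ω := by
      have hconds_d : μ[fun ω' => d (T ω')|𝓕 0] =ᵐ[μ]
          fun ω => (μ[fun ω' => s (T ω')|𝓕 0]) ω - 1 := by
        have h1 : (fun ω' => d (T ω')) = (fun ω' => s (T ω')) - fun _ => (1:ℝ) := rfl
        calc μ[fun ω' => d (T ω')|𝓕 0]
            =ᵐ[μ] μ[fun ω' => s (T ω')|𝓕 0] - μ[fun _ => (1:ℝ)|𝓕 0] := by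
              rw [h1]; exact condExp_sub hsT (integrable_const 1) (𝓕 0)
        _ =ᵐ[μ] fun ω => (μ[fun ω' => s (T ω')|𝓕 0]) ω - 1 := by
            rw [condExp_const hm (1:ℝ)]
            exact Filter.EventuallyEq.of_eq rfl
    -- s =ᵐ r * condexp(s∘T) + (1-r)
      have hseq : s =ᵐ[μ] fun ω => r * (μ[fun ω' => s (T ω')|𝓕 0]) ω + (1 - r) := by
        filter_upwards [hcondsum, hHsum] with ω h1 h2
        have : s ω = r * (∑ i, G i ω) + (1 - r) * (∑ i, H i ω) := by
          simp only [s, lt]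
          rw [Finset.sum_add_distrib, ← Finset.mul_sum, ← Finset.mul_sum]
        rw [this, ← h1]
        have h2' : (∑ i, H i ω) = 1 := h2
        rw [h2', mul_one]
      filter_upwards [hseq, hconds_d] with ω h1 h2
      simp only [d]
      rw [h1, h2]
      ring
    have := kelly_contraction_zero hm hT hr0 hr1 hdint hkey
    filter_upwards [this] with ω h
    have : s ω - 1 = 0 := h
    linarith [this]
  -- a.e. nonnegativity
  have hnn : ∀ᵐ ω ∂μ, ∀ i, 0 ≤ lt ω i := by
    rw [ae_all_iff]
    intro i
    have h1 : 0 ≤ᵐ[μ] ⇑(F i) := (Lp.coeFn_nonneg _).mpr (hFS i)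
    filter_upwards [h1, hFi_ae i] with ω e1 e2
    rw [← e2]
    exact e1
  have hΔae : ∀ᵐ ω ∂μ, lt ω ∈ stdSimplex ℝ (Fin K) := by
    filter_upwards [hnn, hsum1] with ω h1 h2
    exact ⟨h1, h2⟩
  -- measurability of lt w.r.t. 𝓕 0
  have hltm : Measurable[𝓕 0] lt := by
    have hcoord : ∀ i : Fin K, Measurable[𝓕 0] fun ω => lt ω i := fun i =>
      ((stronglyMeasurable_condExp.measurable.const_mul r).add
        (stronglyMeasurable_condExp.measurable.const_mul (1 - r)))
    exact @measurable_pi_lambda Ω (Fin K) (fun _ => ℝ) (𝓕 0) _ lt hcoord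
  -- the actual solution
  let u : Fin K → ℝ := fun _ => (K : ℝ)⁻¹
  have hK0 : (0:ℝ) < K := by
    have := NeZero.pos K
    exact_mod_cast this
  have huΔ : u ∈ stdSimplex ℝ (Fin K) := by
    constructor
    · intro i; positivity
    · simp only [u, Finset.sum_const, Finset.card_univ, Fintype.card_fin, nsmul_eq_mul]
      field_simp
  let l : Ω → Fin K → ℝ := fun ω => if lt ω ∈ stdSimplex ℝ (Fin K) then lt ω else u
  have hlm : Measurable[𝓕 0] l := by
    exact Measurable.ite (hltm (isClosed_stdSimplex ℝ (Fin K)).measurableSet) hltm measurable_const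
  have hlΔ : ∀ ω, l ω ∈ stdSimplex ℝ (Fin K) := by
    intro ω
    simp only [l]
    split_ifs with h
    · exact h
    · exact huΔ
  have hl_ae : l =ᵐ[μ] lt := by
    filter_upwards [hΔae] with ω h
    simp [l, if_pos h]
  have hlint : Integrable l μ := hIntOf l hlm hlΔ
  have hlT : Integrable (fun ω => l (T ω)) μ := hcompInt l hlint
  -- the coordinates of the conditional expectations
  have hGl : ∀ i, (fun ω => (μ[fun ω' => l (T ω')|𝓕 0]) ω i) =ᵐ[μ] G i := by
    intro i
    have hli : (fun ω => l ω i) =ᵐ[μ] ⇑(F i) := by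
      filter_upwards [hl_ae, hFi_ae i] with ω e1 e2
      rw [show l ω i = lt ω i from congrFun e1 i, ← e2]
    calc (fun ω => (μ[fun ω' => l (T ω')|𝓕 0]) ω i)
        =ᵐ[μ] μ[fun ω => l (T ω) i|𝓕 0] := kelly_condexp_eval hm hlT i
    _ =ᵐ[μ] μ[fun ω => (F i : Ω → ℝ) (T ω)|𝓕 0] := by
        apply condExp_congr_ae
        have := kelly_ae_comp hT hli
        filter_upwards [this] with ω h
        exact h
    _ =ᵐ[μ] G i := EventuallyEq.rfl
  have hHl : ∀ i, (fun ω => (μ[fun ω' => R (T ω')|𝓕 0]) ω i) =ᵐ[μ] H i :=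
    fun i => kelly_condexp_eval hm hRT i
  -- the fixed point equation
  have heq : ∀ᵐ ω ∂μ,
      r • (μ[fun ω' => l (T ω')|𝓕 0]) ω + (1 - r) • (μ[fun ω' => R (T ω')|𝓕 0]) ω = l ω := by
    have hall : ∀ᵐ ω ∂μ, ∀ i,
        (μ[fun ω' => l (T ω')|𝓕 0]) ω i = G i ω ∧
        (μ[fun ω' => R (T ω')|𝓕 0]) ω i = H i ω := by
      rw [ae_all_iff]
      intro i
      filter_upwards [hGl i, hHl i] with ω h1 h2
      exact ⟨h1, h2⟩
    filter_upwards [hall, hl_ae] with ω h1 h2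
    funext i
    simp only [Pi.add_apply, Pi.smul_apply, smul_eq_mul]
    rw [(h1 i).1, (h1 i).2, show l ω = lt ω from h2]
  refine ⟨l, hlm, hlΔ, heq, ?_⟩
  -- uniqueness
  intro l' hl'm hl'Δ hl'eq
  have hl'int : Integrable l' μ := hIntOf l' hl'm hl'Δ
  have hl'T : Integrable (fun ω => l' (T ω)) μ := hcompInt l' hl'int
  have coord : ∀ i, (fun ω => l' ω i - l ω i) =ᵐ[μ] 0 := by
    intro i
    set d : Ω → ℝ := fun ω => l' ω i - l ω i with hd_def
    have hdint : Integrable d μ := (hproji l' hl'int i).sub (hproji l hlint i)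
    -- coordinate equations
    have h1 : (fun ω => l' ω i) =ᵐ[μ]
        fun ω => r * (μ[fun ω' => l' (T ω') i|𝓕 0]) ω + (1 - r) * H i ω := by
      filter_upwards [hl'eq, kelly_condexp_eval hm hl'T i, hHl i] with ω e1 e2 e3
      have := congrFun e1 i
      simp only [Pi.add_apply, Pi.smul_apply, smul_eq_mul] at this
      rw [← this, e2, e3]
    have h2 : (fun ω => l ω i) =ᵐ[μ]
        fun ω => r * (μ[fun ω' => l (T ω') i|𝓕 0]) ω + (1 - r) * H i ω := by
      filter_upwards [heq, kelly_condexp_eval hm hlT i, hHl i] with ω e1 e2 e3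
      have := congrFun e1 i
      simp only [Pi.add_apply, Pi.smul_apply, smul_eq_mul] at this
      rw [← this, e2, e3]
    have hkey : d =ᵐ[μ] fun ω => r * (μ[fun ω' => d (T ω')|𝓕 0]) ω := by
      have hsub : μ[fun ω' => d (T ω')|𝓕 0] =ᵐ[μ]
          μ[fun ω' => l' (T ω') i|𝓕 0] - μ[fun ω' => l (T ω') i|𝓕 0] := by
        have : (fun ω' => d (T ω')) =
            (fun ω' => l' (T ω') i) - fun ω' => l (T ω') i := rfl
        rw [this]
        exact condExp_sub (hproji _ hl'T i) (hproji _ hlT i) (𝓕 0)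
      filter_upwards [h1, h2, hsub] with ω e1 e2 e3
      simp only [d]
      rw [e1, e2, e3]
      simp only [Pi.sub_apply]
      ring
    exact kelly_contraction_zero hm hT hr0 hr1 hdint hkey
  have : ∀ᵐ ω ∂μ, ∀ i, l' ω i - l ω i = 0 := by
    rw [ae_all_iff]
    intro i
    filter_upwards [coord i] with ω h
    exact h
  filter_upwards [this] with ω h
  funext i
  have := h i
  linarith
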